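/- Let d and R be positive integers with d ≤ R, and let ε, c, β be reals with 0 < ε < 1, 0 < c < ε/2, and εR ≤ β ≤ R. Then Σ_{i=1}^{⌊cd⌋} S_2(d,i) · β^(i-d+1) ≤ (d²β/2) · (1/2 + c/ε)^d. -/

import Mathlib

/-- `S2 d i` is the number of partitions of a `d`-element set into exactly `i`
blocks, each of size at least `2`. -/
def S2 (d i : ℕ) : ℕ :=
  (Finset.univ.filter fun P : Finset (Finset (Fin d)) =>
    P.card = i ∧ (∀ p ∈ P, 2 ≤ p.card) ∧
      ∀ v : Fin d, (P.filter fun p => v ∈ p).card = 1).card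

open Finset

namespace S2Aux

variable {d : ℕ}

/-- Partitions of `V ⊆ Fin d` into `i` blocks, each of size at least 2. -/
def PS (d : ℕ) (V : Finset (Fin d)) (i : ℕ) : Finset (Finset (Finset (Fin d))) :=
  Finset.univ.filter fun P =>
    P.card = i ∧ (∀ p ∈ P, 2 ≤ p.card) ∧ (∀ p ∈ P, p ⊆ V) ∧
      ∀ v ∈ V, (P.filter fun p => v ∈ p).card = 1

lemma mem_PS {V : Finset (Fin d)} {i : ℕ} {P : Finset (Finset (Fin d))} :
    P ∈ PS d V i ↔ P.card = i ∧ (∀ p ∈ P, 2 ≤ p.card) ∧ (∀ p ∈ P, p ⊆ V) ∧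
      ∀ v ∈ V, (P.filter fun p => v ∈ p).card = 1 := by
  simp [PS]

lemma S2_eq (d i : ℕ) : S2 d i = (PS d Finset.univ i).card := by
  unfold S2 PS
  congr 1
  apply Finset.filter_congr
  intro P _
  constructor
  · rintro ⟨h1, h2, h3⟩
    exact ⟨h1, h2, fun p _ => Finset.subset_univ p, fun v _ => h3 v⟩
  · rintro ⟨h1, h2, h3, h4⟩
    exact ⟨h1, h2, fun v => h4 v (Finset.mem_univ v)⟩

lemma disj {V : Finset (Fin d)} {i : ℕ} {P : Finset (Finset (Fin d))} (hP : P ∈ PS d V i) :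
    ∀ p ∈ P, ∀ q ∈ P, p ≠ q → Disjoint p q := by
  obtain ⟨-, -, hsub, hcov⟩ := mem_PS.mp hP
  intro p hp q hq hpq
  rw [Finset.disjoint_left]
  intro a hap haq
  have hav : a ∈ V := hsub p hp hap
  have h1 := hcov a hav
  have h2 : ({p, q} : Finset (Finset (Fin d))) ⊆ P.filter fun r => a ∈ r := by
    intro r hr
    rcases Finset.mem_insert.mp hr with rfl | hr
    · exact Finset.mem_filter.mpr ⟨hp, hap⟩
    · rw [Finset.mem_singleton.mp hr]; exact Finset.mem_filter.mpr ⟨hq, haq⟩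
  have h3 := Finset.card_le_card h2
  rw [h1, Finset.card_pair hpq] at h3
  omega

lemma two_mul_le {V : Finset (Fin d)} {i : ℕ} {P : Finset (Finset (Fin d))}
    (hP : P ∈ PS d V i) : 2 * i ≤ V.card := by
  obtain ⟨hcard, hsize, hsub, -⟩ := mem_PS.mp hP
  have h1 : P.biUnion id ⊆ V := by
    intro a ha
    obtain ⟨p, hp, hap⟩ := Finset.mem_biUnion.mp ha
    exact hsub p hp hap
  have h2 : (P.biUnion id).card = ∑ p ∈ P, p.card :=
    Finset.card_biUnion (fun p hp q hq h => disj hP p hp q hq h)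
  have h3 : 2 * i ≤ ∑ p ∈ P, p.card := by
    calc 2 * i = ∑ _p ∈ P, 2 := by rw [Finset.sum_const, hcard, smul_eq_mul, mul_comm]
    _ ≤ ∑ p ∈ P, p.card := Finset.sum_le_sum hsize
  calc 2 * i ≤ (P.biUnion id).card := by rw [h2]; exact h3
  _ ≤ V.card := Finset.card_le_card h1

lemma PS_eq_empty {V : Finset (Fin d)} {i : ℕ} (h : V.card < 2 * i) : PS d V i = ∅ := by
  rw [Finset.eq_empty_iff_forall_notMem]
  intro P hP
  exact absurd (two_mul_le hP) (by omega)

end S2Aux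

namespace S2Aux

variable {d : ℕ}

lemma rec_le {V : Finset (Fin d)} (hV : V.Nonempty) {i : ℕ} (hi : i ≠ 0) :
    (PS d V i).card ≤
      ∑ B ∈ V.powerset.filter (fun B => V.min' hV ∈ B), (PS d (V \ B) (i - 1)).card := by
  classical
  set v₀ := V.min' hV with hv₀
  rw [← Finset.card_sigma]
  apply Finset.card_le_card_of_injOn
    (fun P => ⟨(P.filter fun p => v₀ ∈ p).sup id, P.erase ((P.filter fun p => v₀ ∈ p).sup id)⟩)
  · -- maps into sigma
    intro P hP
    obtain ⟨hcard, hsize, hsub, hcov⟩ := mem_PS.mp hP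
    obtain ⟨b, hb⟩ := Finset.card_eq_one.mp (hcov v₀ (V.min'_mem hV))
    have hsup : (P.filter fun p => v₀ ∈ p).sup id = b := by rw [hb, Finset.sup_singleton]; rfl
    have hbmem : b ∈ P.filter fun p => v₀ ∈ p := by rw [hb]; exact Finset.mem_singleton_self b
    obtain ⟨hbP, hv₀b⟩ := Finset.mem_filter.mp hbmem
    simp only [Finset.mem_coe, Finset.mem_sigma]
    constructor
    · simp only [hsup, Finset.mem_filter, Finset.mem_powerset]
      exact ⟨hsub b hbP, hv₀b⟩
    · rw [hsup, mem_PS]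
      refine ⟨?_, ?_, ?_, ?_⟩
      · rw [Finset.card_erase_of_mem hbP, hcard]
      · intro p hp; exact hsize p (Finset.mem_of_mem_erase hp)
      · intro p hp
        have hpP := Finset.mem_of_mem_erase hp
        have hpb : p ≠ b := Finset.ne_of_mem_erase hp
        intro a hap
        rw [Finset.mem_sdiff]
        exact ⟨hsub p hpP hap, fun hab => (Finset.disjoint_left.mp
          (disj hP p hpP b hbP hpb)) hap hab⟩
      · intro v hv
        obtain ⟨hvV, hvb⟩ := Finset.mem_sdiff.mp hv
        rw [Finset.filter_erase]
        have : b ∉ (P.filter fun p => v ∈ p) := fun hc => hvb (Finset.mem_filter.mp hc).2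
        rw [Finset.erase_eq_of_notMem this]
        exact hcov v hvV
  · -- injective
    intro P₁ hP₁ P₂ hP₂ heq
    simp only [Sigma.mk.inj_iff] at heq
    obtain ⟨he1, he2⟩ := heq
    -- recover blocks
    obtain ⟨-, -, -, hcov₁⟩ := mem_PS.mp (Finset.mem_coe.mp hP₁)
    obtain ⟨-, -, -, hcov₂⟩ := mem_PS.mp (Finset.mem_coe.mp hP₂)
    obtain ⟨b₁, hb₁⟩ := Finset.card_eq_one.mp (hcov₁ v₀ (V.min'_mem hV))
    obtain ⟨b₂, hb₂⟩ := Finset.card_eq_one.mp (hcov₂ v₀ (V.min'_mem hV))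
    have hsup₁ : (P₁.filter fun p => v₀ ∈ p).sup id = b₁ := by
      rw [hb₁, Finset.sup_singleton]; rfl
    have hsup₂ : (P₂.filter fun p => v₀ ∈ p).sup id = b₂ := by
      rw [hb₂, Finset.sup_singleton]; rfl
    have hbP₁ : b₁ ∈ P₁ := by
      have : b₁ ∈ P₁.filter fun p => v₀ ∈ p := by rw [hb₁]; exact Finset.mem_singleton_self b₁
      exact (Finset.mem_filter.mp this).1
    have hbP₂ : b₂ ∈ P₂ := by
      have : b₂ ∈ P₂.filter fun p => v₀ ∈ p := by rw [hb₂]; exact Finset.mem_singleton_self b₂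
      exact (Finset.mem_filter.mp this).1
    rw [hsup₁, hsup₂] at he1 he2
    subst he1
    have he2' : P₁.erase b₁ = P₂.erase b₁ := by exact_mod_cast eq_of_heq he2
    calc P₁ = insert b₁ (P₁.erase b₁) := (Finset.insert_erase hbP₁).symm
    _ = insert b₁ (P₂.erase b₁) := by rw [he2']
    _ = P₂ := Finset.insert_erase hbP₂

lemma count_by_card {V : Finset (Fin d)} (hV : V.Nonempty) (s : ℕ) :
    (((V.powerset.filter fun B => V.min' hV ∈ B)).filter (fun B => B.card = s)).card
      ≤ (V.card - 1).choose (s - 1) := by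
  classical
  have key := Finset.card_le_card_of_injOn (fun B => B.erase (V.min' hV))
    (s := ((V.powerset.filter fun B => V.min' hV ∈ B)).filter (fun B => B.card = s))
    (t := (V.erase (V.min' hV)).powersetCard (s - 1)) ?_ ?_
  · rwa [Finset.card_powersetCard, Finset.card_erase_of_mem (V.min'_mem hV)] at key
  · intro B hB
    simp only [Finset.mem_coe, Finset.mem_filter, Finset.mem_powerset] at hB
    obtain ⟨⟨hBV, hvB⟩, hBcard⟩ := hB
    simp only [Finset.mem_coe, Finset.mem_powersetCard]
    exact ⟨Finset.erase_subset_erase _ hBV, by rw [Finset.card_erase_of_mem hvB, hBcard]⟩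
  · intro B₁ hB₁ B₂ hB₂ heq
    simp only [Finset.coe_filter, Set.mem_setOf_eq, Finset.mem_filter, Finset.mem_powerset] at hB₁ hB₂
    calc B₁ = insert (V.min' hV) (B₁.erase (V.min' hV)) := (Finset.insert_erase hB₁.1.2).symm
    _ = insert (V.min' hV) (B₂.erase (V.min' hV)) := by
          rw [show B₁.erase (V.min' hV) = B₂.erase (V.min' hV) from heq]
    _ = B₂ := Finset.insert_erase hB₂.1.2

end S2Aux

namespace S2Aux

open Nat in
lemma main_ind (d : ℕ) (y : ℝ) (hy : 0 < y) :
    ∀ (n : ℕ) (V : Finset (Fin d)), V.card = n → ∀ i : ℕ,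
      ((PS d V i).card : ℝ) * (i ! : ℝ) * y ^ n ≤ (n ! : ℝ) * (y * Real.exp y / 2) ^ i := by
  intro n
  induction n using Nat.strong_induction_on with
  | _ n IH =>
  intro V hVc i
  have hg : 0 < y * Real.exp y / 2 := by positivity
  set g : ℝ := y * Real.exp y / 2 with hgdef
  rcases Nat.eq_zero_or_pos i with rfl | hi
  · rcases Nat.eq_zero_or_pos n with rfl | hn
    · have hsub : PS d V 0 ⊆ {∅} := by
        intro P hP
        have h0 := (mem_PS.mp hP).1
        simp only [Finset.mem_singleton]
        exact Finset.card_eq_zero.mp h0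
      have hle : (PS d V 0).card ≤ 1 :=
        le_trans (Finset.card_le_card hsub) (by simp)
      have : ((PS d V 0).card : ℝ) ≤ 1 := by exact_mod_cast hle
      simpa using this
    · have hVne : V.Nonempty := Finset.card_pos.mp (by omega)
      have hemp : PS d V 0 = ∅ := by
        rw [Finset.eq_empty_iff_forall_notMem]
        intro P hP
        obtain ⟨hc, -, -, hcov⟩ := mem_PS.mp hP
        have h1 := hcov (V.min' hVne) (V.min'_mem hVne)
        rw [Finset.card_eq_zero.mp hc] at h1
        simp at h1
      rw [hemp]
      simp only [Finset.card_empty, Nat.cast_zero, zero_mul, pow_zero, mul_one]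
      positivity
  · by_cases h2i : 2 * i ≤ n
    · -- main case
      have hn0 : 0 < n := by omega
      have hVne : V.Nonempty := Finset.card_pos.mp (by omega)
      set cand := V.powerset.filter (fun B => V.min' hVne ∈ B) with hcand
      have hrec := rec_le hVne (i := i) (by omega)
      have hrec' : ((PS d V i).card : ℝ) ≤
          ∑ B ∈ cand, ((PS d (V \ B) (i-1)).card : ℝ) := by
        rw [← Nat.cast_sum]
        exact_mod_cast hrec
      have hstep1 : ((PS d V i).card : ℝ) * (i ! : ℝ) * y ^ n ≤
          ∑ B ∈ cand, ((PS d (V \ B) (i-1)).card : ℝ) * ((i ! : ℝ) * y ^ n) := by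
        rw [← Finset.sum_mul, mul_assoc]
        exact mul_le_mul_of_nonneg_right hrec' (by positivity)
      have hperB : ∀ B ∈ cand, ((PS d (V \ B) (i-1)).card : ℝ) * ((i ! : ℝ) * y ^ n)
          ≤ (i : ℝ) * g ^ (i-1) * (((n - B.card)! : ℝ) * y ^ B.card) := by
        intro B hB
        simp only [hcand, Finset.mem_filter, Finset.mem_powerset] at hB
        obtain ⟨hBV, hv₀B⟩ := hB
        have hBne : 1 ≤ B.card := Finset.card_pos.mpr ⟨_, hv₀B⟩
        have hBn : B.card ≤ n := hVc ▸ Finset.card_le_card hBV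
        have hcards : (V \ B).card = n - B.card := by rw [Finset.card_sdiff_of_subset hBV, hVc]
        have hIH := IH (n - B.card) (by omega) (V \ B) hcards (i - 1)
        have hfact : (i ! : ℝ) = i * ((i-1)! : ℝ) := by
          exact_mod_cast (Nat.mul_factorial_pred hi.ne').symm
        have hpow : y ^ n = y ^ B.card * y ^ (n - B.card) := by
          rw [← pow_add]; congr 1; omega
        calc ((PS d (V \ B) (i-1)).card : ℝ) * ((i ! : ℝ) * y ^ n)
            = (((PS d (V \ B) (i-1)).card : ℝ) * ((i-1)! : ℝ) * y ^ (n - B.card))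
                * ((i : ℝ) * y ^ B.card) := by rw [hfact, hpow]; ring
        _ ≤ (((n - B.card)! : ℝ) * g ^ (i-1)) * ((i : ℝ) * y ^ B.card) :=
              mul_le_mul_of_nonneg_right hIH (by positivity)
        _ = (i : ℝ) * g ^ (i-1) * (((n - B.card)! : ℝ) * y ^ B.card) := by ring
      have hmaps : ∀ B ∈ cand, B.card ∈ Finset.Icc 1 n := by
        intro B hB
        simp only [hcand, Finset.mem_filter, Finset.mem_powerset] at hB
        exact Finset.mem_Icc.mpr ⟨Finset.card_pos.mpr ⟨_, hB.2⟩, hVc ▸ Finset.card_le_card hB.1⟩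
      have hfib : ∑ B ∈ cand, (i : ℝ) * g ^ (i-1) * (((n - B.card)! : ℝ) * y ^ B.card)
          = ∑ s ∈ Finset.Icc 1 n, ∑ B ∈ cand.filter (fun B => B.card = s),
              (i : ℝ) * g ^ (i-1) * (((n - B.card)! : ℝ) * y ^ B.card) :=
        (Finset.sum_fiberwise_of_maps_to hmaps _).symm
      have hinner : ∀ s ∈ Finset.Icc 1 n,
          ∑ B ∈ cand.filter (fun B => B.card = s),
              (i : ℝ) * g ^ (i-1) * (((n - B.card)! : ℝ) * y ^ B.card)
          ≤ (((n-1).choose (s-1) : ℕ) : ℝ) * ((i : ℝ) * g ^ (i-1) * (((n - s)! : ℝ) * y ^ s)) := by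
        intro s _
        have hcongr : ∀ B ∈ cand.filter (fun B => B.card = s),
            (i : ℝ) * g ^ (i-1) * (((n - B.card)! : ℝ) * y ^ B.card)
              = (i : ℝ) * g ^ (i-1) * (((n - s)! : ℝ) * y ^ s) := by
          intro B hB
          rw [(Finset.mem_filter.mp hB).2]
        rw [Finset.sum_congr rfl hcongr, Finset.sum_const, nsmul_eq_mul]
        apply mul_le_mul_of_nonneg_right _ (by positivity)
        have := count_by_card hVne s
        rw [hVc] at this
        exact_mod_cast this
      have hid : ∀ s ∈ Finset.Icc 1 n,
          (((n-1).choose (s-1) : ℕ) : ℝ) * ((i : ℝ) * g ^ (i-1) * (((n - s)! : ℝ) * y ^ s))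
            = (i : ℝ) * g ^ (i-1) * ((n-1)! : ℝ) * (y ^ s / ((s-1)! : ℝ)) := by
        intro s hs
        obtain ⟨hs1, hsn⟩ := Finset.mem_Icc.mp hs
        have h := Nat.choose_mul_factorial_mul_factorial (show s-1 ≤ n-1 by omega)
        have h2 : (n-1) - (s-1) = n - s := by omega
        rw [h2] at h
        have hcast : (((n-1).choose (s-1) : ℕ) : ℝ) * ((s-1)! : ℝ) * ((n-s)! : ℝ) = ((n-1)! : ℝ) := by
          exact_mod_cast h
        have hfne : (((s-1)!) : ℝ) ≠ 0 := by positivity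
        have hinv1 : ((s-1)! : ℝ) * ((s-1)! : ℝ)⁻¹ = 1 := mul_inv_cancel₀ hfne
        linear_combination (-((((n-1).choose (s-1) : ℕ) : ℝ) * ((n-s)! : ℝ) * (i:ℝ) * g ^ (i-1) * y ^ s)) * hinv1 + ((i:ℝ) * g ^ (i-1) * y ^ s * ((s-1)! : ℝ)⁻¹) * hcast
      have hexp : ∑ s ∈ Finset.Icc 1 n, y ^ s / ((s-1)! : ℝ) ≤ y * Real.exp y := by
        have hre : ∑ s ∈ Finset.Icc 1 n, y ^ s / ((s-1)! : ℝ)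
            = ∑ k ∈ Finset.range n, y ^ (1+k) / (k ! : ℝ) := by
          rw [← Finset.Ico_add_one_right_eq_Icc, Finset.sum_Ico_eq_sum_range]
          simp
        rw [hre]
        have h2 : ∀ k ∈ Finset.range n, y ^ (1+k) / (k ! : ℝ) = y * (y ^ k / (k ! : ℝ)) := by
          intro k _
          rw [pow_add, pow_one]; ring
        rw [Finset.sum_congr rfl h2, ← Finset.mul_sum]
        exact mul_le_mul_of_nonneg_left (Real.sum_le_exp_of_nonneg hy.le n) hy.le
      have hfin : ((PS d V i).card : ℝ) * (i ! : ℝ) * y ^ n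
          ≤ (i:ℝ) * g ^ (i-1) * ((n-1)! : ℝ) * (y * Real.exp y) := by
        calc ((PS d V i).card : ℝ) * (i ! : ℝ) * y ^ n
            ≤ ∑ B ∈ cand, ((PS d (V \ B) (i-1)).card : ℝ) * ((i ! : ℝ) * y ^ n) := hstep1
        _ ≤ ∑ B ∈ cand, (i:ℝ) * g ^ (i-1) * (((n - B.card)! : ℝ) * y ^ B.card) :=
            Finset.sum_le_sum hperB
        _ = ∑ s ∈ Finset.Icc 1 n, ∑ B ∈ cand.filter (fun B => B.card = s),
              (i:ℝ) * g ^ (i-1) * (((n - B.card)! : ℝ) * y ^ B.card) := hfib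
        _ ≤ ∑ s ∈ Finset.Icc 1 n,
              (((n-1).choose (s-1) : ℕ) : ℝ) * ((i:ℝ) * g ^ (i-1) * (((n - s)! : ℝ) * y ^ s)) :=
            Finset.sum_le_sum hinner
        _ = ∑ s ∈ Finset.Icc 1 n, (i:ℝ) * g ^ (i-1) * ((n-1)! : ℝ) * (y ^ s / ((s-1)! : ℝ)) :=
            Finset.sum_congr rfl hid
        _ = (i:ℝ) * g ^ (i-1) * ((n-1)! : ℝ) * ∑ s ∈ Finset.Icc 1 n, (y ^ s / ((s-1)! : ℝ)) := by
            rw [Finset.mul_sum]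
        _ ≤ (i:ℝ) * g ^ (i-1) * ((n-1)! : ℝ) * (y * Real.exp y) :=
            mul_le_mul_of_nonneg_left hexp (by positivity)
      have hyg : y * Real.exp y = 2 * g := by rw [hgdef]; ring
      have hnfac : (n ! : ℝ) = n * ((n-1)! : ℝ) := by
        exact_mod_cast (Nat.mul_factorial_pred hn0.ne').symm
      have hgi : g ^ i = g ^ (i-1) * g := by rw [← pow_succ]; congr 1; omega
      calc ((PS d V i).card : ℝ) * (i ! : ℝ) * y ^ n
          ≤ (i:ℝ) * g ^ (i-1) * ((n-1)! : ℝ) * (y * Real.exp y) := hfin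
      _ = (2*(i:ℝ)) * (((n-1)! : ℝ) * g ^ i) := by rw [hyg, hgi]; ring
      _ ≤ (n:ℝ) * (((n-1)! : ℝ) * g ^ i) := by
          apply mul_le_mul_of_nonneg_right _ (by positivity)
          exact_mod_cast h2i
      _ = (n ! : ℝ) * g ^ i := by rw [hnfac]; ring
    · have hemp : PS d V i = ∅ := PS_eq_empty (show V.card < 2*i by omega)
      rw [hemp]
      simp only [Finset.card_empty, Nat.cast_zero, zero_mul]
      positivity

end S2Aux

namespace S2Aux

open Nat in
lemma S2_bound (d i : ℕ) (y : ℝ) (hy : 0 < y) :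
    (S2 d i : ℝ) * (i ! : ℝ) * y ^ d ≤ (d ! : ℝ) * (y * Real.exp y / 2) ^ i := by
  have h := main_ind d y hy d Finset.univ (by simp) i
  rwa [S2_eq]

open Nat in
lemma fact_bound (i : ℕ) (hi : 1 ≤ i) : ∀ d : ℕ, i ≤ d →
    (d ! : ℝ) * Real.exp d * (i:ℝ) ^ i ≤ (d:ℝ) ^ (d+1) * (i ! : ℝ) * Real.exp i := by
  intro d hd
  induction d, hd using Nat.le_induction with
  | base =>
    have h1 : (i:ℝ) ^ i ≤ (i:ℝ) ^ (i+1) :=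
      pow_le_pow_right₀ (by exact_mod_cast hi) (Nat.le_succ i)
    have h2 : (0:ℝ) < (i ! : ℝ) * Real.exp i := by positivity
    nlinarith [mul_le_mul_of_nonneg_left h1 h2.le]
  | succ d hd IHd =>
    have hd0 : (0:ℝ) < d := by exact_mod_cast lt_of_lt_of_le hi hd
    set t : ℝ := 1/((d:ℝ)+1) with ht
    have hexp1 : Real.exp t ≤ ((d:ℝ)+1)/d := by
      have heq : (d:ℝ)/(d+1) = 1 - t := by rw [ht]; field_simp; ring
      have hA : (d:ℝ)/(d+1) ≤ (Real.exp t)⁻¹ := by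
        rw [← Real.exp_neg, heq]
        have := Real.add_one_le_exp (-t)
        linarith
      have hB := mul_le_mul_of_nonneg_left hA (Real.exp_pos t).le
      rw [mul_inv_cancel₀ (Real.exp_pos t).ne'] at hB
      rw [le_div_iff₀ hd0]
      have hd1 : (0:ℝ) < (d:ℝ)+1 := by positivity
      calc Real.exp t * d = (Real.exp t * ((d:ℝ)/(d+1))) * (d+1) := by field_simp
      _ ≤ 1 * (d+1) := by apply mul_le_mul_of_nonneg_right hB hd1.le
      _ = (d:ℝ)+1 := by ring
    have hC : Real.exp 1 = Real.exp t ^ (d+1) := by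
      rw [← Real.exp_nat_mul]
      congr 1
      rw [ht]
      push_cast
      field_simp
    have hkey : Real.exp 1 * (d:ℝ) ^ (d+1) ≤ ((d:ℝ)+1) ^ (d+1) := by
      have h3 : Real.exp t ^ (d+1) ≤ (((d:ℝ)+1)/d) ^ (d+1) :=
        pow_le_pow_left₀ (Real.exp_pos t).le hexp1 (d+1)
      rw [hC]
      calc Real.exp t ^ (d+1) * (d:ℝ)^(d+1) ≤ (((d:ℝ)+1)/d)^(d+1) * (d:ℝ)^(d+1) := by
            apply mul_le_mul_of_nonneg_right h3 (by positivity)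
      _ = ((d:ℝ)+1)^(d+1) := by
            rw [div_pow, div_mul_cancel₀]
            positivity
    have hfs : ((d+1)! : ℝ) = ((d:ℝ)+1) * (d ! : ℝ) := by
      rw [Nat.factorial_succ]; push_cast; ring
    have hes : Real.exp ((d:ℕ)+1 : ℕ) = Real.exp d * Real.exp 1 := by
      push_cast
      rw [← Real.exp_add]
    have hpos : (0:ℝ) < (i ! : ℝ) * Real.exp i := by positivity
    calc ((d+1)! : ℝ) * Real.exp ((d:ℕ)+1 : ℕ) * (i:ℝ) ^ i
        = (((d:ℝ)+1) * Real.exp 1) * ((d ! : ℝ) * Real.exp d * (i:ℝ)^i) := by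
          rw [hfs, hes]; ring
    _ ≤ (((d:ℝ)+1) * Real.exp 1) * ((d:ℝ) ^ (d+1) * (i ! : ℝ) * Real.exp i) := by
          apply mul_le_mul_of_nonneg_left IHd (by positivity)
    _ = (((d:ℝ)+1) * (Real.exp 1 * (d:ℝ)^(d+1))) * ((i ! : ℝ) * Real.exp i) := by ring
    _ ≤ (((d:ℝ)+1) * ((d:ℝ)+1)^(d+1)) * ((i ! : ℝ) * Real.exp i) := by
          apply mul_le_mul_of_nonneg_right _ hpos.le
          apply mul_le_mul_of_nonneg_left hkey (by positivity)
    _ = ((d:ℝ)+1) ^ (d+1+1) * (i ! : ℝ) * Real.exp i := by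
          rw [pow_succ]; ring
    _ = (((d:ℕ)+1 : ℕ):ℝ) ^ ((d:ℕ)+1+1) * (i ! : ℝ) * Real.exp i := by push_cast; ring

lemma amgm (w : ℝ) (hw : 0 < w) (i k : ℕ) (hi : 0 < i) (hk : 0 < k) :
    (w * ((i:ℝ)+k) / k) ^ k * (((i:ℝ)+k) / (2*i)) ^ i ≤ (w + 1/2) ^ (i+k) := by
  set dd : ℝ := (i:ℝ) + k with hdd
  have hdd0 : 0 < dd := by positivity
  have hi0 : (0:ℝ) < i := by exact_mod_cast hi
  have hk0 : (0:ℝ) < k := by exact_mod_cast hk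
  have h1 := Real.geom_mean_le_arith_mean2_weighted
    (w₁ := (k:ℝ)/dd) (w₂ := (i:ℝ)/dd) (p₁ := w*dd/k) (p₂ := dd/(2*i))
    (by positivity) (by positivity) (by positivity) (by positivity)
    (by field_simp; ring)
  have h2 : (k:ℝ)/dd*(w*dd/k) + (i:ℝ)/dd*(dd/(2*i)) = w + 1/2 := by
    field_simp
  rw [h2] at h1
  have ha : (0:ℝ) ≤ w*dd/k := by positivity
  have hb : (0:ℝ) ≤ dd/(2*i) := by positivity
  have hcast : ((i+k : ℕ) : ℝ) = dd := by rw [hdd]; push_cast; ring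
  have hkk : (k:ℝ)/dd * ((i+k : ℕ) : ℝ) = (k:ℕ) := by rw [hcast]; field_simp
  have hii : (i:ℝ)/dd * ((i+k : ℕ) : ℝ) = (i:ℕ) := by rw [hcast]; field_simp
  calc (w * dd / k) ^ k * (dd / (2*i)) ^ i
      = ((w*dd/k) ^ ((k:ℝ)/dd) * (dd/(2*i)) ^ ((i:ℝ)/dd)) ^ (i+k) := by
        rw [mul_pow,
          ← Real.rpow_natCast ((w*dd/k) ^ ((k:ℝ)/dd)) (i+k),
          ← Real.rpow_natCast ((dd/(2*i)) ^ ((i:ℝ)/dd)) (i+k),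
          ← Real.rpow_mul ha, ← Real.rpow_mul hb, hkk, hii,
          Real.rpow_natCast, Real.rpow_natCast]
  _ ≤ (w + 1/2) ^ (i+k) := pow_le_pow_left₀ (by positivity) h1 (i+k)

end S2Aux

namespace S2Aux

open Nat in
lemma term_bound (d i : ℕ) (ε : ℝ) (hε0 : 0 < ε) (hi : 1 ≤ i)
    (h2 : 2 * (i:ℝ) < ε * (d:ℝ)) (hε1 : ε ≤ 1) :
    (S2 d i : ℝ) ≤ (d:ℝ) * (1/2 + (i:ℝ)/(ε*(d:ℝ))) ^ d * (ε*(d:ℝ)) ^ (d - i) := by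
  have hdR : 2*(i:ℝ) < (d:ℝ) := by nlinarith [Nat.cast_nonneg (α := ℝ) d]
  have hdiN : 2*i < d := by exact_mod_cast hdR
  have hd0 : 0 < d := by omega
  set k : ℕ := d - i with hk
  have hik : i + k = d := by omega
  have hkpos : 0 < k := by omega
  have hid : (i:ℝ) + (k:ℝ) = (d:ℝ) := by exact_mod_cast congrArg (Nat.cast : ℕ → ℝ) hik
  have hi0 : (0:ℝ) < i := by exact_mod_cast hi
  have hk0 : (0:ℝ) < k := by exact_mod_cast hkpos
  have hdR0 : (0:ℝ) < d := by exact_mod_cast hd0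
  set y : ℝ := (k:ℝ)/(i:ℝ) with hydef
  have hy : 0 < y := by positivity
  have hεd0 : (0:ℝ) < ε*(d:ℝ) := by positivity
  set w : ℝ := (i:ℝ)/(ε*(d:ℝ)) with hwdef
  have hw : 0 < w := by positivity
  have hεdy : (ε*(d:ℝ)) * y = (k:ℝ)/w := by
    rw [hydef, hwdef]
    field_simp
  have hiy : (i:ℝ)*y = (k:ℝ) := by
    rw [hydef]; field_simp
  -- AM-GM consequence
  have hAM' : (d:ℝ)^d ≤ (1/2+w)^d * (((k:ℝ)/w)^k * (2*(i:ℝ))^i) := by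
    have h := amgm w hw i k (by omega) (by omega)
    rw [hid] at h
    have e1 : (w*(d:ℝ)/k)^k * ((k:ℝ)/w)^k = (d:ℝ)^k := by
      rw [← mul_pow]
      congr 1
      field_simp
    have e2 : ((d:ℝ)/(2*i))^i * (2*(i:ℝ))^i = (d:ℝ)^i := by
      rw [← mul_pow]
      congr 1
      field_simp
    calc (d:ℝ)^d = ((w*(d:ℝ)/k)^k * ((k:ℝ)/w)^k) * (((d:ℝ)/(2*i))^i * (2*(i:ℝ))^i) := by
          rw [e1, e2, ← pow_add]
          congr 1
          omega
    _ = ((w*(d:ℝ)/k)^k * ((d:ℝ)/(2*i))^i) * (((k:ℝ)/w)^k * (2*(i:ℝ))^i) := by ring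
    _ ≤ (w+1/2)^(i+k) * (((k:ℝ)/w)^k * (2*(i:ℝ))^i) :=
          mul_le_mul_of_nonneg_right h (by positivity)
    _ = (1/2+w)^d * (((k:ℝ)/w)^k * (2*(i:ℝ))^i) := by
          rw [hik, add_comm w (1/2)]
  have hstep : (d:ℝ)^(d+1) ≤ (d:ℝ) * (1/2+w)^d * (ε*(d:ℝ))^k * y^k * (i:ℝ)^i * 2^i := by
    have hεdyk : (ε*(d:ℝ))^k * y^k = ((k:ℝ)/w)^k := by rw [← mul_pow, hεdy]
    have hi2 : (i:ℝ)^i * 2^i = (2*(i:ℝ))^i := by rw [← mul_pow]; congr 1; ring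
    calc (d:ℝ)^(d+1) = (d:ℝ) * (d:ℝ)^d := by rw [pow_succ]; ring
    _ ≤ (d:ℝ) * ((1/2+w)^d * (((k:ℝ)/w)^k * (2*(i:ℝ))^i)) :=
          mul_le_mul_of_nonneg_left hAM' (by positivity)
    _ = (d:ℝ) * (1/2+w)^d * (ε*(d:ℝ))^k * y^k * (i:ℝ)^i * 2^i := by
          rw [← hεdyk, ← hi2]; ring
  -- main multiplicative chain
  have hQ : (0:ℝ) < (i ! : ℝ) * y^d * Real.exp (d:ℝ) * (i:ℝ)^i * 2^i := by positivity
  rw [← mul_le_mul_iff_of_pos_right hQ]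
  have hS := S2_bound d i y hy
  have hF := fact_bound i hi d (by omega)
  have hexpyi : (Real.exp y)^i = Real.exp (k:ℝ) := by
    rw [← Real.exp_nat_mul, hiy]
  have heik : Real.exp ((i:ℝ)) * Real.exp ((k:ℝ)) = Real.exp ((d:ℝ)) := by
    rw [← Real.exp_add, hid]
  have hyik : y^i * y^k = y^d := by rw [← pow_add, hik]
  calc (S2 d i : ℝ) * ((i ! : ℝ) * y^d * Real.exp (d:ℝ) * (i:ℝ)^i * 2^i)
      = ((S2 d i : ℝ) * (i ! : ℝ) * y^d) * (Real.exp (d:ℝ) * (i:ℝ)^i * 2^i) := by ring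
  _ ≤ ((d ! : ℝ) * (y * Real.exp y / 2)^i) * (Real.exp (d:ℝ) * (i:ℝ)^i * 2^i) :=
        mul_le_mul_of_nonneg_right hS (by positivity)
  _ = ((d ! : ℝ) * Real.exp (d:ℝ) * (i:ℝ)^i) * (y^i * (Real.exp y)^i) := by
        rw [div_pow, mul_pow]
        field_simp
  _ = ((d ! : ℝ) * Real.exp (d:ℝ) * (i:ℝ)^i) * (y^i * Real.exp (k:ℝ)) := by rw [hexpyi]
  _ ≤ ((d:ℝ)^(d+1) * (i ! : ℝ) * Real.exp (i:ℝ)) * (y^i * Real.exp (k:ℝ)) :=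
        mul_le_mul_of_nonneg_right hF (by positivity)
  _ = (d:ℝ)^(d+1) * ((i ! : ℝ) * y^i * (Real.exp (i:ℝ) * Real.exp (k:ℝ))) := by ring
  _ = (d:ℝ)^(d+1) * ((i ! : ℝ) * y^i * Real.exp (d:ℝ)) := by rw [heik]
  _ ≤ ((d:ℝ) * (1/2+w)^d * (ε*(d:ℝ))^k * y^k * (i:ℝ)^i * 2^i)
        * ((i ! : ℝ) * y^i * Real.exp (d:ℝ)) :=
        mul_le_mul_of_nonneg_right hstep (by positivity)
  _ = ((d:ℝ) * (1/2 + w) ^ d * (ε*(d:ℝ)) ^ k)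
        * ((i ! : ℝ) * (y^i * y^k) * Real.exp (d:ℝ) * (i:ℝ)^i * 2^i) := by ring
  _ = (d:ℝ) * (1/2 + (i:ℝ)/(ε*(d:ℝ))) ^ d * (ε*(d:ℝ)) ^ (d-i)
        * ((i ! : ℝ) * y^d * Real.exp (d:ℝ) * (i:ℝ)^i * 2^i) := by
        rw [hyik, ← hwdef, ← hk]

end S2Aux

theorem stmt_15 (d R : ℕ) (hd : 0 < d) (hR : 0 < R) (hdR : d ≤ R)
    (ε c β : ℝ) (hε0 : 0 < ε) (hε1 : ε < 1) (hc0 : 0 < c) (hc : c < ε / 2)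
    (hβl : ε * R ≤ β) (hβu : β ≤ R) :
    ∑ i ∈ Finset.Icc 1 ⌊c * d⌋₊, (S2 d i : ℝ) * β ^ ((i : ℤ) - d + 1) ≤
      (d : ℝ) ^ 2 * β / 2 * (1 / 2 + c / ε) ^ d := by
  have hdR0 : (0:ℝ) < d := by exact_mod_cast hd
  have hβ0 : 0 < β := lt_of_lt_of_le (by positivity) hβl
  have hdRR : (d:ℝ) ≤ (R:ℝ) := by exact_mod_cast hdR
  have hεd : ε * (d:ℝ) ≤ β := le_trans (by nlinarith) hβl
  have hεd0 : (0:ℝ) < ε * d := by positivity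
  set m := ⌊c * (d:ℝ)⌋₊ with hm
  have hmc : (m:ℝ) ≤ c * d := Nat.floor_le (by positivity)
  have hterm : ∀ i ∈ Finset.Icc 1 m, (S2 d i : ℝ) * β ^ ((i : ℤ) - d + 1)
      ≤ β * ((d:ℝ) * (1/2 + c/ε) ^ d) := by
    intro i hiI
    obtain ⟨hi1, him⟩ := Finset.mem_Icc.mp hiI
    have himR : (i:ℝ) ≤ (m:ℝ) := by exact_mod_cast him
    have hiR : (i:ℝ) ≤ c * d := le_trans himR hmc
    have h2i : 2*(i:ℝ) < ε * (d:ℝ) := by nlinarith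
    have hdiN : 2*i < d := by
      have h' : 2*(i:ℝ) < (d:ℝ) := by nlinarith
      exact_mod_cast h'
    set k := d - i with hk
    have hze : β ^ ((i : ℤ) - d + 1) = β * (β ^ k)⁻¹ := by
      have he : (i : ℤ) - d + 1 = 1 - (k : ℤ) := by
        rw [hk]; push_cast [Nat.cast_sub (by omega : i ≤ d)]; ring
      rw [he, zpow_sub₀ hβ0.ne', zpow_one, zpow_natCast]
      ring
    have hβk : (ε * (d:ℝ)) ^ k ≤ β ^ k := pow_le_pow_left₀ hεd0.le hεd k
    have hinv : (β ^ k)⁻¹ ≤ ((ε * (d:ℝ)) ^ k)⁻¹ :=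
      inv_anti₀ (by positivity) hβk
    have hwle : (i:ℝ)/(ε*(d:ℝ)) ≤ c/ε := by
      rw [div_le_div_iff₀ hεd0 hε0]
      nlinarith
    have htb := S2Aux.term_bound d i ε hε0 hi1 h2i hε1.le
    have hS2nn : (0:ℝ) ≤ (S2 d i : ℝ) := Nat.cast_nonneg _
    calc (S2 d i : ℝ) * β ^ ((i : ℤ) - d + 1)
        = (S2 d i : ℝ) * (β ^ k)⁻¹ * β := by rw [hze]; ring
    _ ≤ (S2 d i : ℝ) * ((ε*(d:ℝ))^k)⁻¹ * β :=
        mul_le_mul_of_nonneg_right (mul_le_mul_of_nonneg_left hinv hS2nn) hβ0.le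
    _ ≤ ((d:ℝ) * (1/2 + (i:ℝ)/(ε*(d:ℝ)))^d * (ε*(d:ℝ))^(d-i)) * ((ε*(d:ℝ))^k)⁻¹ * β := by
        apply mul_le_mul_of_nonneg_right (mul_le_mul_of_nonneg_right htb (by positivity)) hβ0.le
    _ = (d:ℝ) * (1/2 + (i:ℝ)/(ε*(d:ℝ)))^d * β := by
        rw [← hk]
        field_simp
    _ ≤ (d:ℝ) * (1/2 + c/ε)^d * β := by
        apply mul_le_mul_of_nonneg_right _ hβ0.le
        apply mul_le_mul_of_nonneg_left _ hdR0.le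
        apply pow_le_pow_left₀ (by positivity) (by linarith) d
    _ = β * ((d:ℝ) * (1/2 + c/ε)^d) := by ring
  calc ∑ i ∈ Finset.Icc 1 m, (S2 d i : ℝ) * β ^ ((i : ℤ) - d + 1)
      ≤ ∑ _i ∈ Finset.Icc 1 m, β * ((d:ℝ) * (1/2 + c/ε)^d) := Finset.sum_le_sum hterm
  _ = (m : ℝ) * (β * ((d:ℝ) * (1/2+c/ε)^d)) := by
      rw [Finset.sum_const, Nat.card_Icc, nsmul_eq_mul]
      simp
  _ ≤ ((d:ℝ)/2) * (β * ((d:ℝ) * (1/2+c/ε)^d)) := by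
      apply mul_le_mul_of_nonneg_right _ (by positivity)
      nlinarith
  _ = (d:ℝ)^2 * β / 2 * (1/2 + c/ε)^d := by ring
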